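/- (No restriction without substantial misalignment.) Let ū and w̄ be square-integrable random vectors in ℝⁿ such that the matrix Var(w̄) − E[(ū − w̄)(ū − w̄)ᵀ] is positive definite, where Var(w̄) = E[(w̄ − E[w̄])(w̄ − E[w̄])ᵀ]. Then for every matrix M ∈ ℝ^{r×n} of full row rank with r ≥ 1, E[‖M(ū − w̄)‖²] < E[‖M(w̄ − E[w̄])‖²]. Interpreted in the regulation model: the expected welfare loss from letting the agent choose his bliss point ū on the unexplained components (left-hand side) is strictly smaller than the expected welfare loss from fixing those components ex ante at their best constant value E[w̄] (right-hand side), so restricting the agent to fully explainable prediction functions is dominated by imposing no ex-ante restriction. -/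

import Mathlib

open MeasureTheory Matrix

lemma l2_mul_integrable {α : Type*} [MeasurableSpace α] {μ : Measure α}
    {f g : α → ℝ} (hf : MemLp f 2 μ) (hg : MemLp g 2 μ) :
    Integrable (fun ω => f ω * g ω) μ := by
  have h : (fun ω => f ω * g ω)
      = fun ω => (1 / 2) * ((f ω + g ω) ^ 2 - f ω ^ 2 - g ω ^ 2) := by
    funext ω; ring
  rw [h]
  exact (((hf.add hg).integrable_sq.sub hf.integrable_sq).sub hg.integrable_sq).const_mul _

lemma key_integral {α : Type*} [MeasurableSpace α] (μ : Measure α) [IsProbabilityMeasure μ]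
    {n r : ℕ} (x : α → Fin n → ℝ) (hx : ∀ i, MemLp (fun ω => x ω i) 2 μ)
    (M : Matrix (Fin r) (Fin n) ℝ) :
    ∫ ω, ∑ i, ((M *ᵥ x ω) i) ^ 2 ∂μ
      = ∑ i, ∑ j, ∑ k, M i j * M i k * ∫ ω, x ω j * x ω k ∂μ := by
  have hint : ∀ j k, Integrable (fun ω => x ω j * x ω k) μ := fun j k =>
    l2_mul_integrable (hx j) (hx k)
  have h1 : ∀ ω, ∑ i, ((M *ᵥ x ω) i) ^ 2
      = ∑ i, ∑ j, ∑ k, M i j * M i k * (x ω j * x ω k) := by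
    intro ω
    refine Finset.sum_congr rfl fun i _ => ?_
    simp only [mulVec, dotProduct, sq, Finset.sum_mul_sum]
    exact Finset.sum_congr rfl fun j _ => Finset.sum_congr rfl fun k _ => by ring
  simp_rw [h1]
  rw [integral_finset_sum]
  · refine Finset.sum_congr rfl fun i _ => ?_
    rw [integral_finset_sum]
    · refine Finset.sum_congr rfl fun j _ => ?_
      rw [integral_finset_sum]
      · exact Finset.sum_congr rfl fun k _ => integral_const_mul _ _
      · exact fun k _ => (hint j k).const_mul _
    · exact fun j _ => integrable_finset_sum _ fun k _ => (hint j k).const_mul _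
  · exact fun i _ => integrable_finset_sum _ fun j _ =>
      integrable_finset_sum _ fun k _ => (hint j k).const_mul _

lemma quad_sum_pos {n r : ℕ} (M : Matrix (Fin r) (Fin n) ℝ) (hr : 1 ≤ r) (hM : M.rank = r)
    (D : Matrix (Fin n) (Fin n) ℝ) (hpd : D.PosDef) :
    0 < ∑ i, ∑ j, ∑ k, M i j * M i k * D j k := by
  have hM0 : M ≠ 0 := by
    intro h
    rw [h, Matrix.rank_zero] at hM
    omega
  obtain ⟨i₀, j₀, hij⟩ : ∃ i j, M i j ≠ 0 := by
    by_contra h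
    push_neg at h
    exact hM0 (by ext i j; simp [h])
  have hterm : ∀ (i : Fin r) (v : Fin n → ℝ),
      ∑ j, ∑ k, v j * v k * D j k = star v ⬝ᵥ D *ᵥ v := by
    intro i v
    simp only [dotProduct, mulVec, star, Finset.mul_sum]
    refine Finset.sum_congr rfl fun j _ =>
      Finset.sum_congr rfl fun k _ => by change v j * v k * D j k = v j * (D j k * v k); ring
  have hge : ∀ i : Fin r, 0 ≤ ∑ j, ∑ k, M i j * M i k * D j k := by
    intro i
    rw [hterm i (fun j => M i j)]
    exact hpd.posSemidef.dotProduct_mulVec_nonneg _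
  have hgt : 0 < ∑ j, ∑ k, M i₀ j * M i₀ k * D j k := by
    rw [hterm i₀ (fun j => M i₀ j)]
    exact hpd.dotProduct_mulVec_pos (fun h => hij (congrFun h j₀))
  exact Finset.sum_pos' (fun i _ => hge i) ⟨i₀, Finset.mem_univ _, hgt⟩

/-- No restriction without substantial misalignment: if
`Var(w̄) − E[(ū − w̄)(ū − w̄)ᵀ]` is positive definite, then for every matrix `M` of full row
rank `r ≥ 1`, `E[‖M(ū − w̄)‖²] < E[‖M(w̄ − E[w̄])‖²]`. -/
theorem misalignment_loss_lt_restriction_loss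
    {α : Type*} [MeasurableSpace α] (μ : Measure α) [IsProbabilityMeasure μ]
    (n : ℕ) (ubar wbar : α → Fin n → ℝ)
    (hu : ∀ i, MemLp (fun ω => ubar ω i) 2 μ)
    (hw : ∀ i, MemLp (fun ω => wbar ω i) 2 μ)
    (hpd : ((Matrix.of fun i j =>
          ∫ ω, (wbar ω i - ∫ ω', wbar ω' i ∂μ) * (wbar ω j - ∫ ω', wbar ω' j ∂μ) ∂μ)
        - (Matrix.of fun i j =>
          ∫ ω, (ubar ω i - wbar ω i) * (ubar ω j - wbar ω j) ∂μ) :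
        Matrix (Fin n) (Fin n) ℝ).PosDef)
    (r : ℕ) (hr : 1 ≤ r)
    (M : Matrix (Fin r) (Fin n) ℝ) (hM : M.rank = r) :
    ∫ ω, ∑ i, ((M *ᵥ (ubar ω - wbar ω)) i) ^ 2 ∂μ
      < ∫ ω, ∑ i, ((M *ᵥ (wbar ω - fun j => ∫ ω', wbar ω' j ∂μ)) i) ^ 2 ∂μ := by
  have hxu : ∀ i, MemLp (fun ω => (ubar ω - wbar ω) i) 2 μ := fun i => (hu i).sub (hw i)
  have hxw : ∀ i, MemLp
      (fun ω => ((wbar ω - fun j => ∫ ω', wbar ω' j ∂μ) : Fin n → ℝ) i) 2 μ :=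
    fun i => (hw i).sub (memLp_const _)
  have hL := key_integral μ (fun ω => ubar ω - wbar ω) hxu M
  have hR := key_integral μ (fun ω => wbar ω - fun j => ∫ ω', wbar ω' j ∂μ) hxw M
  rw [hL, hR, ← sub_pos]
  have hpos := quad_sum_pos M hr hM _ hpd
  calc (0:ℝ) < ∑ i, ∑ j, ∑ k, M i j * M i k *
        (((Matrix.of fun i j =>
          ∫ ω, (wbar ω i - ∫ ω', wbar ω' i ∂μ) * (wbar ω j - ∫ ω', wbar ω' j ∂μ) ∂μ)
        - (Matrix.of fun i j =>
          ∫ ω, (ubar ω i - wbar ω i) * (ubar ω j - wbar ω j) ∂μ) :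
        Matrix (Fin n) (Fin n) ℝ) j k) := hpos
    _ = _ := by
        simp only [Matrix.sub_apply, Matrix.of_apply, Pi.sub_apply, mul_sub,
          Finset.sum_sub_distrib]
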